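/- For every natural number n ≥ 2, ∑_{k=1}^{n-1} k·(H_k² - H_k^{(2)}) = C(n,2)·(H_n² - H_n^{(2)}) - (1/4)·n(n-1)(2H_n - 1), where C(n,2) = n(n-1)/2. -/

import Mathlib

open Finset

noncomputable def H (n : ℕ) : ℝ := ∑ i ∈ Finset.range n, (1 : ℝ) / (i + 1)

noncomputable def H2 (n : ℕ) : ℝ := ∑ i ∈ Finset.range n, (1 : ℝ) / ((i + 1) ^ 2)

lemma H_succ (n : ℕ) : H (n + 1) = H n + 1 / (n + 1) := by
  simp [H, Finset.sum_range_succ]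

lemma H2_succ (n : ℕ) : H2 (n + 1) = H2 n + 1 / ((n + 1) ^ 2) := by
  simp [H2, Finset.sum_range_succ]

theorem sum_k_harmonic_sq_diff (n : ℕ) (hn : 2 ≤ n) :
    ∑ k ∈ Finset.Icc 1 (n - 1), (k : ℝ) * (H k ^ 2 - H2 k)
      = (n.choose 2 : ℝ) * (H n ^ 2 - H2 n) - (1 / 4) * n * (n - 1) * (2 * H n - 1) := by
  induction n with
  | zero => omega
  | succ m ih =>
    rcases Nat.lt_or_ge m 2 with hm | hm
    · interval_cases m
      · omega
      · norm_num [H, H2, Finset.sum_range_succ]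
    · have h1 : m + 1 - 1 = (m - 1) + 1 := by omega
      rw [h1, Finset.sum_Icc_succ_top (by omega : 1 ≤ m - 1 + 1), ih hm]
      have h2 : (m - 1 + 1 : ℕ) = m := by omega
      rw [h2]
      have hch : ((m+1).choose 2 : ℝ) = (m.choose 2 : ℝ) + m := by
        rw [Nat.choose_succ_succ]
        push_cast [Nat.choose_one_right]
        ring
      have hch2 : (m.choose 2 : ℝ) = m * (m - 1) / 2 := by
        rw [Nat.choose_two_right,
          Nat.cast_div (Nat.even_mul_pred_self m).two_dvd (by norm_num)]
        push_cast [Nat.cast_sub (by omega : 1 ≤ m)]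
        ring
      have hm1 : ((m : ℝ) + 1) ≠ 0 := by positivity
      rw [hch, hch2, H_succ, H2_succ]
      push_cast [Nat.cast_sub (by omega : 1 ≤ m)]
      field_simp
      ring
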